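/- Let f_150 be the local rule f_150(a,b,c) = a + b + c. For every integer n ≥ 1 and all a, b ∈ Q, the transition functions (f_150)_{(n),a-*} and (f_150)_{(n),*-b} on Q^n are bijective if and only if n ≢ 1 (mod 3); that is, CA-150_{a-*}(n) and CA-150_{*-b}(n) are reversible iff n ≢ 1 (mod 3). -/
import Mathlib


/-- The state set `Q = {0,1}` as `ZMod 2`. -/
abbrev Q : Type := ZMod 2

/-- A triplet local rule `f : Q³ → Q`. -/
abbrev Rule : Type := Q → Q → Q → Q

/-- A configuration of length `n`. -/
abbrev Config (n : ℕ) : Type := Fin n → Q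

/-- The transition sending `x` to the word whose `i`-th letter is
`f (x (i-1)) (x i) (x (i+1))`, where the virtual boundary letters
`x₀` and `x_{n+1}` are given as `x0` and `xn1`. -/
def caTrans {n : ℕ} (f : Rule) (x0 xn1 : Q) (x : Config n) : Config n :=
  fun i =>
    f (if _h : i.1 = 0 then x0
       else x ⟨i.1 - 1, Nat.lt_of_le_of_lt (Nat.sub_le _ _) i.isLt⟩)
      (x i)
      (if h : i.1 + 1 < n then x ⟨i.1 + 1, h⟩ else xn1)

/-- The first letter `x₁` of a nonempty configuration. -/
def firstCell {n : ℕ} (hn : 0 < n) (x : Config n) : Q := x ⟨0, hn⟩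

/-- The last letter `xₙ` of a nonempty configuration. -/
def lastCell {n : ℕ} (hn : 0 < n) (x : Config n) : Q :=
  x ⟨n - 1, Nat.sub_lt hn Nat.one_pos⟩

/-- Fixed boundary `a-b` : `x₀ = a`, `x_{n+1} = b`. -/
def fixedBC {n : ℕ} (f : Rule) (a b : Q) : Config n → Config n :=
  fun x => caTrans f a b x

/-- Boundary `a-*` : `x₀ = a`, `x_{n+1} = xₙ`. -/
def leftFixedBC {n : ℕ} (hn : 0 < n) (f : Rule) (a : Q) : Config n → Config n :=
  fun x => caTrans f a (lastCell hn x) x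

/-- Boundary `*-b` : `x₀ = x₁`, `x_{n+1} = b`. -/
def rightFixedBC {n : ℕ} (hn : 0 < n) (f : Rule) (b : Q) : Config n → Config n :=
  fun x => caTrans f (firstCell hn x) b x

/-- Free boundary `*-*` : `x₀ = x₁`, `x_{n+1} = xₙ`. -/
def freeBC {n : ℕ} (hn : 0 < n) (f : Rule) : Config n → Config n :=
  fun x => caTrans f (firstCell hn x) (lastCell hn x) x

/-- Cyclic boundary `*` : `x₀ = xₙ`, `x_{n+1} = x₁`. -/
def cyclicBC {n : ℕ} (hn : 0 < n) (f : Rule) : Config n → Config n :=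
  fun x => caTrans f (lastCell hn x) (firstCell hn x) x

/-- Rule 150 : `f(a,b,c) = a + b + c`. -/
def f150 : Rule := fun a b c => a + b + c


/-! ### Auxiliary char-2 arithmetic lemmas -/

lemma q_eq_of_add_eq_zero {u v : Q} (h : u + v = 0) : u = v := by revert u v; decide

lemma qL1 {c p q p' q' : Q} (h : c + p + q = c + p' + q') :
    (p + p') + (q + q') = 0 := by revert c p q p' q'; decide

lemma qL2 {p q r p' q' r' : Q} (h : p + q + r = p' + q' + r') :
    (p + p') + (q + q') + (r + r') = 0 := by revert p q r p' q' r'; decide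

lemma qL3 {p q p' q' : Q} (h : p + q + q = p' + q' + q') : p + p' = 0 := by
  revert p q p' q'; decide

lemma qL3' {p q p' q' : Q} (h : q + q + p = q' + q' + p') : p + p' = 0 := by
  revert p q p' q'; decide

lemma qL1' {p q c p' q' : Q} (h : p + q + c = p' + q' + c) :
    (p + p') + (q + q') = 0 := by revert c p q p' q'; decide

lemma qL4 {u v w z : Q} (h : u + v + w = 0) (h1 : u = z) (h2 : v = z) : w = 0 := by
  revert u v w z; decide

lemma qL5 {u v w z : Q} (h : u + v + w = 0) (h1 : u = z) (h2 : v = 0) : w = z := by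
  revert u v w z; decide

lemma qL6 {u v w z : Q} (h : u + v + w = 0) (h1 : u = 0) (h2 : v = z) : w = z := by
  revert u v w z; decide

lemma qL7 {u v : Q} (h : u + v = 0) (h1 : u = 0) : v = 0 := by revert u v; decide

lemma qL7' {u v : Q} (h : u + v = 0) (h1 : v = 0) : u = 0 := by revert u v; decide

/-! ### Expansion lemmas -/

lemma left_apply {n : ℕ} (hn : 0 < n) (a : Q) (x : Config n) (i : Fin n) :
    leftFixedBC hn f150 a x i =
      (if _h : i.1 = 0 then a
        else x ⟨i.1 - 1, Nat.lt_of_le_of_lt (Nat.sub_le _ _) i.isLt⟩) + x i +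
      (if h : i.1 + 1 < n then x ⟨i.1 + 1, h⟩ else x ⟨n - 1, Nat.sub_lt hn Nat.one_pos⟩) := rfl

lemma right_apply {n : ℕ} (hn : 0 < n) (b : Q) (x : Config n) (i : Fin n) :
    rightFixedBC hn f150 b x i =
      (if _h : i.1 = 0 then x ⟨0, hn⟩
        else x ⟨i.1 - 1, Nat.lt_of_le_of_lt (Nat.sub_le _ _) i.isLt⟩) + x i +
      (if h : i.1 + 1 < n then x ⟨i.1 + 1, h⟩ else b) := rfl

/-! ### Injectivity when `n % 3 ≠ 1` -/

lemma left_inj {n : ℕ} (hn : 0 < n) (h3 : n % 3 ≠ 1) (a : Q) :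
    Function.Injective (leftFixedBC hn f150 a) := by
  intro x y hxy
  have hn2 : 2 ≤ n := by omega
  set X : ℕ → Q := fun i => if h : i < n then x ⟨i, h⟩ else 0 with hX
  set Y : ℕ → Q := fun i => if h : i < n then y ⟨i, h⟩ else 0 with hY
  have hXd : ∀ i (h : i < n), X i = x ⟨i, h⟩ := fun i h => dif_pos h
  have hYd : ∀ i (h : i < n), Y i = y ⟨i, h⟩ := fun i h => dif_pos h
  have e0 : (X 0 + Y 0) + (X 1 + Y 1) = 0 := by
    have hc := congrFun hxy ⟨0, hn⟩
    rw [left_apply, left_apply] at hc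
    simp only [dif_pos rfl, dif_pos (show 0 + 1 < n by omega)] at hc
    rw [hXd 0 hn, hXd 1 (by omega), hYd 0 hn, hYd 1 (by omega)]
    exact qL1 hc
  have estep : ∀ i, i + 2 < n →
      (X i + Y i) + (X (i+1) + Y (i+1)) + (X (i+2) + Y (i+2)) = 0 := by
    intro i h
    have hc := congrFun hxy ⟨i + 1, by omega⟩
    rw [left_apply, left_apply] at hc
    simp only [dif_neg (by omega : ¬ i + 1 = 0), dif_pos (show i + 1 + 1 < n by omega)] at hc
    rw [hXd i (by omega), hXd (i+1) (by omega), hXd (i+2) (by omega),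
      hYd i (by omega), hYd (i+1) (by omega), hYd (i+2) (by omega)]
    exact qL2 hc
  have elast : X (n-2) + Y (n-2) = 0 := by
    have hc := congrFun hxy ⟨n - 1, by omega⟩
    rw [left_apply, left_apply] at hc
    simp only [dif_neg (by omega : ¬ n - 1 = 0), dif_neg (by omega : ¬ n - 1 + 1 < n)] at hc
    rw [hXd (n-2) (by omega), hYd (n-2) (by omega)]
    simp only [show n - 1 - 1 = n - 2 from by omega] at hc
    exact qL3 hc
  have claim : ∀ i, i < n → X i + Y i = if i % 3 = 2 then 0 else X 0 + Y 0 := by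
    intro i
    induction i using Nat.strong_induction_on with
    | _ i ih =>
      intro h
      match i, ih, h with
      | 0, _, _ => simp
      | 1, ih, h =>
        rw [if_neg (by omega : ¬ 1 % 3 = 2)]
        exact (q_eq_of_add_eq_zero e0).symm
      | (i+2), ih, h =>
        have e := estep i h
        have ih1 := ih i (by omega) (by omega)
        have ih2 := ih (i+1) (by omega) (by omega)
        have hi3 : i % 3 = 0 ∨ i % 3 = 1 ∨ i % 3 = 2 := by omega
        rcases hi3 with h0 | h0 | h0
        · rw [if_neg (by omega : ¬ i % 3 = 2)] at ih1
          rw [if_neg (by omega : ¬ (i+1) % 3 = 2)] at ih2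
          rw [if_pos (by omega : (i+2) % 3 = 2)]
          exact qL4 e ih1 ih2
        · rw [if_neg (by omega : ¬ i % 3 = 2)] at ih1
          rw [if_pos (by omega : (i+1) % 3 = 2)] at ih2
          rw [if_neg (by omega : ¬ (i+2) % 3 = 2)]
          exact qL5 e ih1 ih2
        · rw [if_pos (by omega : i % 3 = 2)] at ih1
          rw [if_neg (by omega : ¬ (i+1) % 3 = 2)] at ih2
          rw [if_neg (by omega : ¬ (i+2) % 3 = 2)]
          exact qL6 e ih1 ih2
  have hd0 : X 0 + Y 0 = 0 := by
    have c2 := claim (n-2) (by omega)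
    rw [if_neg (by omega : ¬ (n-2) % 3 = 2)] at c2
    rw [← c2]; exact elast
  funext i
  apply q_eq_of_add_eq_zero
  have := claim i.1 i.2
  rw [hXd i.1 i.2, hYd i.1 i.2] at this
  rw [this]
  split
  · rfl
  · exact hd0

lemma right_inj {n : ℕ} (hn : 0 < n) (h3 : n % 3 ≠ 1) (b : Q) :
    Function.Injective (rightFixedBC hn f150 b) := by
  intro x y hxy
  have hn2 : 2 ≤ n := by omega
  set X : ℕ → Q := fun i => if h : i < n then x ⟨i, h⟩ else 0 with hX
  set Y : ℕ → Q := fun i => if h : i < n then y ⟨i, h⟩ else 0 with hY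
  have hXd : ∀ i (h : i < n), X i = x ⟨i, h⟩ := fun i h => dif_pos h
  have hYd : ∀ i (h : i < n), Y i = y ⟨i, h⟩ := fun i h => dif_pos h
  have e0 : X 1 + Y 1 = 0 := by
    have hc := congrFun hxy ⟨0, hn⟩
    rw [right_apply, right_apply] at hc
    simp only [dif_pos rfl, dif_pos (show 0 + 1 < n by omega)] at hc
    rw [hXd 1 (by omega), hYd 1 (by omega)]
    exact qL3' hc
  have estep : ∀ i, i + 2 < n →
      (X i + Y i) + (X (i+1) + Y (i+1)) + (X (i+2) + Y (i+2)) = 0 := by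
    intro i h
    have hc := congrFun hxy ⟨i + 1, by omega⟩
    rw [right_apply, right_apply] at hc
    simp only [dif_neg (by omega : ¬ i + 1 = 0), dif_pos (show i + 1 + 1 < n by omega)] at hc
    rw [hXd i (by omega), hXd (i+1) (by omega), hXd (i+2) (by omega),
      hYd i (by omega), hYd (i+1) (by omega), hYd (i+2) (by omega)]
    exact qL2 hc
  have elast : (X (n-2) + Y (n-2)) + (X (n-1) + Y (n-1)) = 0 := by
    have hc := congrFun hxy ⟨n - 1, by omega⟩
    rw [right_apply, right_apply] at hc
    simp only [dif_neg (by omega : ¬ n - 1 = 0), dif_neg (by omega : ¬ n - 1 + 1 < n)] at hc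
    rw [hXd (n-2) (by omega), hYd (n-2) (by omega), hXd (n-1) (by omega), hYd (n-1) (by omega)]
    simp only [show n - 1 - 1 = n - 2 from by omega] at hc
    exact qL1' hc
  have claim : ∀ i, i < n → X i + Y i = if i % 3 = 1 then 0 else X 0 + Y 0 := by
    intro i
    induction i using Nat.strong_induction_on with
    | _ i ih =>
      intro h
      match i, ih, h with
      | 0, _, _ => simp
      | 1, ih, h => rw [if_pos rfl]; exact e0
      | (i+2), ih, h =>
        have e := estep i h
        have ih1 := ih i (by omega) (by omega)
        have ih2 := ih (i+1) (by omega) (by omega)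
        have hi3 : i % 3 = 0 ∨ i % 3 = 1 ∨ i % 3 = 2 := by omega
        rcases hi3 with h0 | h0 | h0
        · rw [if_neg (by omega : ¬ i % 3 = 1)] at ih1
          rw [if_pos (by omega : (i+1) % 3 = 1)] at ih2
          rw [if_neg (by omega : ¬ (i+2) % 3 = 1)]
          exact qL5 e ih1 ih2
        · rw [if_pos (by omega : i % 3 = 1)] at ih1
          rw [if_neg (by omega : ¬ (i+1) % 3 = 1)] at ih2
          rw [if_neg (by omega : ¬ (i+2) % 3 = 1)]
          exact qL6 e ih1 ih2
        · rw [if_neg (by omega : ¬ i % 3 = 1)] at ih1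
          rw [if_neg (by omega : ¬ (i+1) % 3 = 1)] at ih2
          rw [if_pos (by omega : (i+2) % 3 = 1)]
          exact qL4 e ih1 ih2
  have hd0 : X 0 + Y 0 = 0 := by
    have c1 := claim (n-2) (by omega)
    have c2 := claim (n-1) (by omega)
    rcases (by omega : n % 3 = 0 ∨ n % 3 = 2) with h0 | h0
    · rw [if_pos (by omega : (n-2) % 3 = 1)] at c1
      rw [if_neg (by omega : ¬ (n-1) % 3 = 1)] at c2
      rw [← c2]; exact qL7 elast c1
    · rw [if_neg (by omega : ¬ (n-2) % 3 = 1)] at c1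
      rw [if_pos (by omega : (n-1) % 3 = 1)] at c2
      rw [← c1]; exact qL7' elast c2
  funext i
  apply q_eq_of_add_eq_zero
  have := claim i.1 i.2
  rw [hXd i.1 i.2, hYd i.1 i.2] at this
  rw [this]
  split
  · rfl
  · exact hd0

/-! ### Non-injectivity when `n % 3 = 1` -/

lemma left_notinj {n : ℕ} (hn : 0 < n) (h3 : n % 3 = 1) (a : Q) :
    ¬ Function.Injective (leftFixedBC hn f150 a) := by
  set w : Config n := fun i => if i.1 % 3 = 2 then 0 else 1 with hw
  have hTw : leftFixedBC hn f150 a w = leftFixedBC hn f150 a (fun _ => 0) := by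
    funext i
    rw [left_apply, left_apply]
    have hi := i.2
    by_cases h0 : i.1 = 0 <;> by_cases h1 : i.1 + 1 < n <;>
      simp only [hw, h0, h1, dif_pos, dif_neg, not_false_iff, dite_true, dite_false] <;>
      split_ifs <;> first | omega | exact absurd ‹False› not_false | (revert a; decide)
  intro hinj
  have := congrFun (hinj hTw) ⟨0, hn⟩
  simp [hw] at this
lemma right_notinj {n : ℕ} (hn : 0 < n) (h3 : n % 3 = 1) (b : Q) :
    ¬ Function.Injective (rightFixedBC hn f150 b) := by
  set w : Config n := fun i => if i.1 % 3 = 1 then 0 else 1 with hw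
  have hTw : rightFixedBC hn f150 b w = rightFixedBC hn f150 b (fun _ => 0) := by
    funext i
    rw [right_apply, right_apply]
    have hi := i.2
    by_cases h0 : i.1 = 0 <;> by_cases h1 : i.1 + 1 < n <;>
      simp only [hw, h0, h1, dif_pos, dif_neg, not_false_iff, dite_true, dite_false] <;>
      split_ifs <;> first | omega | exact absurd ‹False› not_false | (revert b; decide)
  intro hinj
  have := congrFun (hinj hTw) ⟨0, hn⟩
  simp [hw] at this

theorem statement17 (n : ℕ) (hn : 1 ≤ n) (a b : Q) :
    (Function.Bijective (leftFixedBC hn f150 a) ↔ n % 3 ≠ 1) ∧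
    (Function.Bijective (rightFixedBC hn f150 b) ↔ n % 3 ≠ 1) := by
  constructor
  · constructor
    · intro hb h1
      exact left_notinj hn h1 a hb.1
    · intro h3
      exact (Finite.injective_iff_bijective).mp (left_inj hn h3 a)
  · constructor
    · intro hb h1
      exact right_notinj hn h1 b hb.1
    · intro h3
      exact (Finite.injective_iff_bijective).mp (right_inj hn h3 b)
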